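/- Let R be an elementary divisor domain, g(t) = g_1(t)g_2(t) with g_1, g_2 monic in R[t], and f(t) ∈ R[t]. If Res(f, g_2) is a unit of R, then f(C_g) is equivalent over R to I_{deg g_2} ⊕ f(C_{g_1}). -/

import Mathlib

open Polynomial Matrix

def companion {R : Type*} [CommRing R] (g : R[X]) :
    Matrix (Fin g.natDegree) (Fin g.natDegree) R :=
  Matrix.of fun i j =>
    if (i : ℕ) = 0 then -g.coeff (g.natDegree - 1 - (j : ℕ))
    else if (i : ℕ) = (j : ℕ) + 1 then 1 else 0

def IsEDD (R : Type*) [CommRing R] : Prop :=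
  ∀ a b c : R, ∃ d x y z w : R,
    (d ∣ a ∧ d ∣ b ∧ d ∣ c ∧ ∀ e : R, e ∣ a → e ∣ b → e ∣ c → e ∣ d) ∧
    d = z * x * a + z * y * b + w * y * c

section Aux
variable {R : Type*} [CommRing R]

lemma aux_aeval_transpose {n : Type*} [Fintype n] [DecidableEq n]
    (A : Matrix n n R) (p : R[X]) :
    aeval Aᵀ p = (aeval A p)ᵀ := by
  induction p using Polynomial.induction_on' with
  | add p q hp hq => simp [hp, hq]
  | monomial k a =>
      rw [aeval_monomial, aeval_monomial, Matrix.transpose_mul, ← Matrix.transpose_pow,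
        Algebra.algebraMap_eq_smul_one]
      simp [Matrix.smul_mul, Matrix.mul_smul]

lemma aux_aeval_commute {n m : Type*} [Fintype n] [DecidableEq n] [Fintype m] [DecidableEq m]
    (A : Matrix n n R) (B : Matrix m m R) (P : Matrix n m R) (h : A * P = P * B) (p : R[X]) :
    aeval A p * P = P * aeval B p := by
  induction p using Polynomial.induction_on with
  | C a =>
      rw [aeval_C, aeval_C]
      simp [Algebra.algebraMap_eq_smul_one, Matrix.smul_mul, Matrix.mul_smul]
  | add p q hp hq => rw [map_add, map_add, Matrix.add_mul, Matrix.mul_add, hp, hq]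
  | monomial k a ih =>
      have hA : (aeval A) (C a * X ^ (k + 1)) = (aeval A) (C a * X ^ k) * A := by
        rw [pow_succ, ← mul_assoc, _root_.map_mul, aeval_X]
      have hB : (aeval B) (C a * X ^ (k + 1)) = (aeval B) (C a * X ^ k) * B := by
        rw [pow_succ, ← mul_assoc, _root_.map_mul, aeval_X]
      rw [hA, hB, Matrix.mul_assoc, h, ← Matrix.mul_assoc, ih, Matrix.mul_assoc]

lemma aux_aeval_fromBlocks {n m : Type*} [Fintype n] [DecidableEq n] [Fintype m] [DecidableEq m]
    (A₁ : Matrix n n R) (Y : Matrix n m R) (A₂ : Matrix m m R) (p : R[X]) :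
    ∃ B, aeval (fromBlocks A₁ Y 0 A₂) p = fromBlocks (aeval A₁ p) B 0 (aeval A₂ p) := by
  induction p using Polynomial.induction_on with
  | C a =>
      refine ⟨0, ?_⟩
      rw [aeval_C, aeval_C, aeval_C, Algebra.algebraMap_eq_smul_one,
        ← Matrix.fromBlocks_one, Matrix.fromBlocks_smul]
      simp [Algebra.algebraMap_eq_smul_one]
  | add p q hp hq =>
      obtain ⟨B₁, h₁⟩ := hp; obtain ⟨B₂, h₂⟩ := hq
      exact ⟨B₁ + B₂, by rw [map_add, h₁, h₂, map_add, map_add, Matrix.fromBlocks_add, add_zero]⟩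
  | monomial k a ih =>
      obtain ⟨B, hB⟩ := ih
      have hT : (aeval (fromBlocks A₁ Y 0 A₂)) (C a * X ^ (k + 1)) =
          (aeval (fromBlocks A₁ Y 0 A₂)) (C a * X ^ k) * fromBlocks A₁ Y 0 A₂ := by
        rw [pow_succ, ← mul_assoc, _root_.map_mul, aeval_X]
      have h₁ : (aeval A₁) (C a * X ^ (k + 1)) = (aeval A₁) (C a * X ^ k) * A₁ := by
        rw [pow_succ, ← mul_assoc, _root_.map_mul, aeval_X]
      have h₂ : (aeval A₂) (C a * X ^ (k + 1)) = (aeval A₂) (C a * X ^ k) * A₂ := by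
        rw [pow_succ, ← mul_assoc, _root_.map_mul, aeval_X]
      refine ⟨aeval A₁ (C a * X ^ k) * Y + B * A₂, ?_⟩
      rw [hT, h₁, h₂, hB, Matrix.fromBlocks_multiply]
      simp

lemma aux_shift_sum {N : ℕ} (v : Fin N → R[X]) (c : ℕ) (hc : c ≠ 0) (hcN : c ≤ N) :
    (∑ m : Fin N, (if c = (m : ℕ) + 1 then (1 : R) else 0) • v m) = v ⟨c - 1, by omega⟩ := by
  have key : ∀ m : Fin N, (if c = (m : ℕ) + 1 then (1 : R) else 0) • v m =
      if m = ⟨c - 1, by omega⟩ then v m else 0 := by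
    intro m
    by_cases h : c = (m : ℕ) + 1
    · rw [if_pos h, one_smul, if_pos (Fin.ext (show (m : ℕ) = c - 1 by omega))]
    · rw [if_neg h, zero_smul, if_neg]
      intro hm
      apply h
      rw [hm]
      show c = c - 1 + 1
      omega
  rw [Finset.sum_congr rfl fun m _ => key m, Finset.sum_ite_eq' Finset.univ _ v,
    if_pos (Finset.mem_univ _)]

lemma aux_single_sum {N : ℕ} (v : Fin N → R[X]) (c : ℕ) (hc : c < N) :
    (∑ m : Fin N, (if (m : ℕ) = c then (1 : R) else 0) • v m) = v ⟨c, hc⟩ := by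
  have key : ∀ m : Fin N, (if (m : ℕ) = c then (1 : R) else 0) • v m =
      if m = ⟨c, hc⟩ then v m else 0 := by
    intro m
    by_cases h : (m : ℕ) = c
    · rw [if_pos h, one_smul, if_pos (Fin.ext (show (m : ℕ) = c by omega))]
    · rw [if_neg h, zero_smul, if_neg]
      intro hm
      apply h
      rw [hm]
  rw [Finset.sum_congr rfl fun m _ => key m, Finset.sum_ite_eq' Finset.univ _ v,
    if_pos (Finset.mem_univ _)]

lemma aux_colzero_sum (a h : R[X]) (hh : h.Monic) :
    (∑ m : Fin h.natDegree,
      (-(h.coeff (h.natDegree - 1 - (m : ℕ)))) • (a * X ^ (h.natDegree - 1 - (m : ℕ))))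
      = a * X ^ h.natDegree - a * h := by
  rw [Fin.sum_univ_eq_sum_range
    (fun q => (-(h.coeff (h.natDegree - 1 - q))) • (a * X ^ (h.natDegree - 1 - q))),
    Finset.sum_range_reflect (fun q => (-(h.coeff q)) • (a * X ^ q)) h.natDegree]
  have key : ∀ q, (-(h.coeff q)) • (a * X ^ q) = -(a * (C (h.coeff q) * X ^ q)) := by
    intro q
    rw [smul_eq_C_mul, map_neg]
    ring
  rw [Finset.sum_congr rfl fun q _ => key q, Finset.sum_neg_distrib, ← Finset.mul_sum]
  have hs : ∑ i ∈ Finset.range h.natDegree, C (h.coeff i) * X ^ i = h - X ^ h.natDegree := by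
    linear_combination -hh.as_sum
  rw [hs]
  ring

end Aux

/-- If `g = g₁ g₂` with `g₁, g₂` monic and `Res(f, g₂) = det f(C_{g₂})` is a unit
of `R`, then `f(C_g)` is equivalent over `R` to `I_{deg g₂} ⊕ f(C_{g₁})`. -/
theorem stmt10 {R : Type*} [CommRing R] [IsDomain R] (hR : IsEDD R)
    (g g₁ g₂ f : R[X]) (hg₁ : g₁.Monic) (hg₂ : g₂.Monic) (hg : g = g₁ * g₂)
    (hres : IsUnit (Polynomial.aeval (companion g₂) f).det) :
    letI e : Fin g₂.natDegree ⊕ Fin g₁.natDegree ≃ Fin g.natDegree :=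
      finSumFinEquiv.trans (finCongr
        (show g₂.natDegree + g₁.natDegree = g.natDegree by
          rw [hg, Polynomial.Monic.natDegree_mul hg₁ hg₂, Nat.add_comm]))
    ∃ U V : Matrix (Fin g.natDegree) (Fin g.natDegree) R,
      IsUnit U.det ∧ IsUnit V.det ∧
      U * Polynomial.aeval (companion g) f * V =
        Matrix.reindex e e
          (Matrix.fromBlocks (1 : Matrix (Fin g₂.natDegree) (Fin g₂.natDegree) R) 0 0
            (Polynomial.aeval (companion g₁) f)) := by
  have hn : g₂.natDegree + g₁.natDegree = g.natDegree := by
    rw [hg, Polynomial.Monic.natDegree_mul hg₁ hg₂, Nat.add_comm]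
  set e : Fin g₂.natDegree ⊕ Fin g₁.natDegree ≃ Fin g.natDegree :=
    finSumFinEquiv.trans (finCongr hn) with he
  show ∃ U V : Matrix (Fin g.natDegree) (Fin g.natDegree) R,
    IsUnit U.det ∧ IsUnit V.det ∧
    U * Polynomial.aeval (companion g) f * V =
      Matrix.reindex e e
        (Matrix.fromBlocks (1 : Matrix (Fin g₂.natDegree) (Fin g₂.natDegree) R) 0 0
          (Polynomial.aeval (companion g₁) f))
  have heL : ∀ i : Fin g₂.natDegree, (e (Sum.inl i) : ℕ) = (i : ℕ) := by intro i; simp [e]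
  have heR : ∀ j : Fin g₁.natDegree, (e (Sum.inr j) : ℕ) = g₂.natDegree + (j : ℕ) := by
    intro j; simp [e]
  -- the basis polynomials
  set b : Fin g₂.natDegree ⊕ Fin g₁.natDegree → R[X] :=
    Sum.elim (fun i => g₁ * X ^ (g₂.natDegree - 1 - (i : ℕ)))
      (fun j => (X : R[X]) ^ (g₁.natDegree - 1 - (j : ℕ))) with hb
  set P : Matrix (Fin g₂.natDegree ⊕ Fin g₁.natDegree) (Fin g₂.natDegree ⊕ Fin g₁.natDegree) R :=
    Matrix.of (fun m l => (b l).coeff (g.natDegree - 1 - (e m : ℕ))) with hP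
  set Y : Matrix (Fin g₂.natDegree) (Fin g₁.natDegree) R :=
    Matrix.of (fun i j => if (i : ℕ) = g₂.natDegree - 1 ∧ (j : ℕ) = 0 then 1 else 0) with hY
  set T : Matrix (Fin g₂.natDegree ⊕ Fin g₁.natDegree) (Fin g₂.natDegree ⊕ Fin g₁.natDegree) R :=
    fromBlocks (companion g₂)ᵀ Y 0 (companion g₁)ᵀ with hT
  set C' : Matrix (Fin g₂.natDegree ⊕ Fin g₁.natDegree) (Fin g₂.natDegree ⊕ Fin g₁.natDegree) R :=
    reindex e.symm e.symm (companion g) with hC'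
  -- degrees of basis polynomials
  have hbdeg : ∀ l, (b l).natDegree = g.natDegree - 1 - (e l : ℕ) := by
    rintro (i | j)
    · rw [hb]
      simp only [Sum.elim_inl]
      rw [Polynomial.Monic.natDegree_mul hg₁ (monic_X_pow _), natDegree_X_pow, heL]
      have := i.2
      omega
    · rw [hb]
      simp only [Sum.elim_inr]
      rw [natDegree_X_pow, heR]
      have := j.2
      omega
  have hbm : ∀ l, (b l).Monic := by
    rintro (i | j)
    · exact hg₁.mul (monic_X_pow _)
    · exact monic_X_pow _
  have hblead : ∀ l, (b l).coeff (g.natDegree - 1 - (e l : ℕ)) = 1 := by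
    intro l; rw [← hbdeg l]; exact (hbm l).coeff_natDegree
  have hbtop : ∀ l, (b l).coeff (g.natDegree - 1) = if (e l : ℕ) = 0 then 1 else 0 := by
    intro l
    have hel : (e l : ℕ) < g.natDegree := (e l).2
    by_cases h : (e l : ℕ) = 0
    · rw [if_pos h, ← hblead l, h, Nat.sub_zero]
    · rw [if_neg h]
      apply Polynomial.coeff_eq_zero_of_natDegree_lt
      rw [hbdeg l]; omega
  -- P is invertible (triangular with unit diagonal after reindexing)
  have hPdet : IsUnit P.det := by
    set Pn : Matrix (Fin g.natDegree) (Fin g.natDegree) R :=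
      Matrix.of (fun k l => (b (e.symm l)).coeff (g.natDegree - 1 - (k : ℕ))) with hPn
    have hsub : P = Pn.submatrix e e := by
      ext m l
      simp only [hP, hPn, Matrix.submatrix_apply, Matrix.of_apply, Equiv.symm_apply_apply]
    rw [hsub, Matrix.det_submatrix_equiv_self]
    have htri : Pn.BlockTriangular (OrderDual.toDual) := by
      intro k l hkl
      have hkl' : (k : ℕ) < (l : ℕ) := hkl
      simp only [hPn, Matrix.of_apply]
      apply Polynomial.coeff_eq_zero_of_natDegree_lt
      rw [hbdeg]
      have : ((e (e.symm l)) : ℕ) = (l : ℕ) := by rw [e.apply_symm_apply]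
      rw [this]
      have := l.2
      omega
    rw [Matrix.det_of_lowerTriangular Pn htri]
    have hdiag : ∀ k : Fin g.natDegree, Pn k k = 1 := by
      intro k
      have h1 : ((e (e.symm k)) : ℕ) = (k : ℕ) := by rw [e.apply_symm_apply]
      have h2 := hblead (e.symm k)
      rw [h1] at h2
      simpa only [hPn, Matrix.of_apply] using h2
    rw [Finset.prod_congr rfl (fun k _ => hdiag k), Finset.prod_const_one]
    exact isUnit_one
  -- the key polynomial identity: T is the matrix of multiplication by X in basis b, modulo g
  have hpoly : ∀ l, (∑ m, T m l • b m) = X * b l - (if (e l : ℕ) = 0 then g else 0) := by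
    rintro (i₀ | j₀)
    · rw [Fintype.sum_sum_type]
      have hz : (∑ m : Fin g₁.natDegree, T (Sum.inr m) (Sum.inl i₀) • b (Sum.inr m)) = 0 := by
        apply Finset.sum_eq_zero
        intro m _
        simp [hT]
      rw [hz, add_zero]
      by_cases h0 : (i₀ : ℕ) = 0
      · rw [if_pos (by rw [heL]; exact h0)]
        have hkey : ∀ m : Fin g₂.natDegree, T (Sum.inl m) (Sum.inl i₀) • b (Sum.inl m) =
            (-(g₂.coeff (g₂.natDegree - 1 - (m : ℕ)))) •
              (g₁ * X ^ (g₂.natDegree - 1 - (m : ℕ))) := by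
          intro m
          simp only [hT, Matrix.fromBlocks_apply₁₁, Matrix.transpose_apply, companion,
            Matrix.of_apply, hb, Sum.elim_inl, h0, if_true]
        rw [Finset.sum_congr rfl fun m _ => hkey m, aux_colzero_sum g₁ g₂ hg₂]
        rw [hb]
        simp only [Sum.elim_inl, h0, Nat.sub_zero]
        have hd2 : 0 < g₂.natDegree := lt_of_le_of_lt (Nat.zero_le _) i₀.isLt
        have hx : X * (g₁ * X ^ (g₂.natDegree - 1)) = g₁ * X ^ g₂.natDegree := by
          conv_rhs => rw [show g₂.natDegree = (g₂.natDegree - 1) + 1 from by omega]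
          rw [pow_succ]
          ring
        rw [hx, hg]
      · rw [if_neg (by rw [heL]; exact h0), sub_zero]
        have hkey : ∀ m : Fin g₂.natDegree, T (Sum.inl m) (Sum.inl i₀) • b (Sum.inl m) =
            (if (i₀ : ℕ) = (m : ℕ) + 1 then (1 : R) else 0) • b (Sum.inl m) := by
          intro m
          simp only [hT, Matrix.fromBlocks_apply₁₁, Matrix.transpose_apply, companion,
            Matrix.of_apply]
          rw [if_neg h0]
        rw [Finset.sum_congr rfl fun m _ => hkey m,
          aux_shift_sum _ _ h0 (le_of_lt i₀.isLt)]
        rw [hb]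
        simp only [Sum.elim_inl]
        have hi := i₀.isLt
        have hexp : g₂.natDegree - 1 - ((i₀ : ℕ) - 1) = (g₂.natDegree - 1 - (i₀ : ℕ)) + 1 := by
          omega
        show g₁ * X ^ (g₂.natDegree - 1 - ((i₀ : ℕ) - 1)) =
          X * (g₁ * X ^ (g₂.natDegree - 1 - (i₀ : ℕ)))
        rw [hexp, pow_succ]
        ring
    · rw [Fintype.sum_sum_type]
      by_cases h0 : (j₀ : ℕ) = 0
      · have hd1 : 0 < g₁.natDegree := lt_of_le_of_lt (Nat.zero_le _) j₀.isLt
        have hx : X * (X : R[X]) ^ (g₁.natDegree - 1) = X ^ g₁.natDegree := by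
          conv_rhs => rw [show g₁.natDegree = (g₁.natDegree - 1) + 1 from by omega]
          rw [pow_succ]
          ring
        have hsum2 : (∑ m : Fin g₁.natDegree, T (Sum.inr m) (Sum.inr j₀) • b (Sum.inr m)) =
            X ^ g₁.natDegree - g₁ := by
          have hkey : ∀ m : Fin g₁.natDegree, T (Sum.inr m) (Sum.inr j₀) • b (Sum.inr m) =
              (-(g₁.coeff (g₁.natDegree - 1 - (m : ℕ)))) •
                ((1 : R[X]) * X ^ (g₁.natDegree - 1 - (m : ℕ))) := by
            intro m
            simp only [hT, Matrix.fromBlocks_apply₂₂, Matrix.transpose_apply, companion,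
              Matrix.of_apply, hb, Sum.elim_inr, h0, if_true, one_mul]
          rw [Finset.sum_congr rfl fun m _ => hkey m, aux_colzero_sum 1 g₁ hg₁, one_mul, one_mul]
        by_cases hd2 : g₂.natDegree = 0
        · have hg21 : g₂ = 1 := (hg₂.natDegree_eq_zero).mp hd2
          have hsum1 : (∑ m : Fin g₂.natDegree, T (Sum.inl m) (Sum.inr j₀) • b (Sum.inl m)) = 0 := by
            apply Finset.sum_eq_zero
            intro m _
            exact absurd m.isLt (by omega)
          rw [hsum1, hsum2, zero_add, if_pos (by rw [heR]; omega)]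
          rw [hb]
          simp only [Sum.elim_inr, h0, Nat.sub_zero]
          rw [hx, hg, hg21, mul_one]
        · have hsum1 : (∑ m : Fin g₂.natDegree, T (Sum.inl m) (Sum.inr j₀) • b (Sum.inl m)) =
              g₁ := by
            have hkey : ∀ m : Fin g₂.natDegree, T (Sum.inl m) (Sum.inr j₀) • b (Sum.inl m) =
                (if (m : ℕ) = g₂.natDegree - 1 then (1 : R) else 0) • b (Sum.inl m) := by
              intro m
              simp only [hT, Matrix.fromBlocks_apply₁₂, hY, Matrix.of_apply, h0, and_true]
            rw [Finset.sum_congr rfl fun m _ => hkey m,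
              aux_single_sum _ _ (show g₂.natDegree - 1 < g₂.natDegree by omega)]
            rw [hb]
            show g₁ * X ^ (g₂.natDegree - 1 - (g₂.natDegree - 1)) = g₁
            rw [show g₂.natDegree - 1 - (g₂.natDegree - 1) = 0 from by omega, pow_zero, mul_one]
          rw [hsum1, hsum2, if_neg (by rw [heR]; omega), sub_zero]
          rw [hb]
          simp only [Sum.elim_inr, h0, Nat.sub_zero]
          rw [hx]
          ring
      · have hsum1 : (∑ m : Fin g₂.natDegree, T (Sum.inl m) (Sum.inr j₀) • b (Sum.inl m)) = 0 := by
          apply Finset.sum_eq_zero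
          intro m _
          simp only [hT, Matrix.fromBlocks_apply₁₂, hY, Matrix.of_apply]
          rw [if_neg (fun hc => h0 hc.2), zero_smul]
        have hkey : ∀ m : Fin g₁.natDegree, T (Sum.inr m) (Sum.inr j₀) • b (Sum.inr m) =
            (if (j₀ : ℕ) = (m : ℕ) + 1 then (1 : R) else 0) • b (Sum.inr m) := by
          intro m
          simp only [hT, Matrix.fromBlocks_apply₂₂, Matrix.transpose_apply, companion,
            Matrix.of_apply]
          rw [if_neg h0]
        rw [hsum1, zero_add, Finset.sum_congr rfl fun m _ => hkey m,
          aux_shift_sum _ _ h0 (le_of_lt j₀.isLt), if_neg (by rw [heR]; omega), sub_zero]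
        rw [hb]
        simp only [Sum.elim_inr]
        have hj := j₀.isLt
        have hexp : g₁.natDegree - 1 - ((j₀ : ℕ) - 1) = (g₁.natDegree - 1 - (j₀ : ℕ)) + 1 := by
          omega
        show (X : R[X]) ^ (g₁.natDegree - 1 - ((j₀ : ℕ) - 1)) =
          X * X ^ (g₁.natDegree - 1 - (j₀ : ℕ))
        rw [hexp, pow_succ]
        ring
  -- the conjugation identity
  have hKL : C'ᵀ * P = P * T := by
    ext k l
    have hk : (e k : ℕ) < g.natDegree := (e k).isLt
    have hn0 : 0 < g.natDegree := by omega
    have hRHS : (P * T) k l =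
        (X * b l).coeff (g.natDegree - 1 - (e k : ℕ)) -
          (if (e l : ℕ) = 0 then g.coeff (g.natDegree - 1 - (e k : ℕ)) else 0) := by
      rw [Matrix.mul_apply]
      have hpt : ∀ m, P k m * T m l = (T m l • b m).coeff (g.natDegree - 1 - (e k : ℕ)) := by
        intro m
        rw [Polynomial.coeff_smul, smul_eq_mul, mul_comm]
        rfl
      rw [Finset.sum_congr rfl fun m _ => hpt m, ← Polynomial.finset_sum_coeff, hpoly l,
        Polynomial.coeff_sub]
      congr 1
      split_ifs <;> simp
    have hLHS : (C'ᵀ * P) k l =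
        (if (e l : ℕ) = 0 then -(g.coeff (g.natDegree - 1 - (e k : ℕ))) else 0)
        + (if (e k : ℕ) + 1 < g.natDegree then
            (b l).coeff (g.natDegree - 1 - ((e k : ℕ) + 1)) else 0) := by
      rw [Matrix.mul_apply]
      have hC : ∀ m, (C'ᵀ) k m * P m l =
          companion g (e m) (e k) * (b l).coeff (g.natDegree - 1 - (e m : ℕ)) := by
        intro m
        simp [hC', hP, Matrix.transpose_apply, Matrix.reindex_apply, Matrix.submatrix_apply]
      rw [Finset.sum_congr rfl fun m _ => hC m,
        Equiv.sum_comp e (fun m' : Fin g.natDegree =>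
          companion g m' (e k) * (b l).coeff (g.natDegree - 1 - (m' : ℕ)))]
      have hsplit : ∀ m' : Fin g.natDegree,
          companion g m' (e k) * (b l).coeff (g.natDegree - 1 - (m' : ℕ)) =
          (if m' = (⟨0, hn0⟩ : Fin g.natDegree) then
              -(g.coeff (g.natDegree - 1 - (e k : ℕ))) * (b l).coeff (g.natDegree - 1) else 0)
          + (if (m' : ℕ) = (e k : ℕ) + 1 then
              (b l).coeff (g.natDegree - 1 - (m' : ℕ)) else 0) := by
        intro m'
        simp only [companion, Matrix.of_apply]
        by_cases h1 : (m' : ℕ) = 0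
        · rw [if_pos h1, if_pos (Fin.ext (show (m' : ℕ) = 0 from h1)),
            if_neg (show ¬ (m' : ℕ) = (e k : ℕ) + 1 by omega), add_zero, h1, Nat.sub_zero,
            neg_mul]
        · rw [if_neg h1,
            if_neg (show ¬ m' = (⟨0, hn0⟩ : Fin g.natDegree) from
              fun hm => h1 (by simp [hm])), zero_add]
          by_cases h2 : (m' : ℕ) = (e k : ℕ) + 1
          · rw [if_pos h2, if_pos h2, one_mul]
          · rw [if_neg h2, if_neg h2, zero_mul]
      rw [Finset.sum_congr rfl fun m' _ => hsplit m', Finset.sum_add_distrib]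
      congr 1
      · rw [Finset.sum_ite_eq' Finset.univ (⟨0, hn0⟩ : Fin g.natDegree) _,
          if_pos (Finset.mem_univ _), hbtop l]
        split_ifs <;> ring
      · by_cases hlt : (e k : ℕ) + 1 < g.natDegree
        · rw [if_pos hlt]
          have hc : ∀ m' : Fin g.natDegree,
              (if (m' : ℕ) = (e k : ℕ) + 1 then
                (b l).coeff (g.natDegree - 1 - (m' : ℕ)) else 0) =
              (if m' = (⟨(e k : ℕ) + 1, hlt⟩ : Fin g.natDegree) then
                (b l).coeff (g.natDegree - 1 - (m' : ℕ)) else 0) := by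
            intro m'
            by_cases h : (m' : ℕ) = (e k : ℕ) + 1
            · rw [if_pos h, if_pos (Fin.ext (show (m' : ℕ) = (e k : ℕ) + 1 from h))]
            · rw [if_neg h, if_neg (fun hm => h (by simp [hm]))]
          rw [Finset.sum_congr rfl fun m' _ => hc m',
            Finset.sum_ite_eq' Finset.univ _ (fun m' : Fin g.natDegree =>
              (b l).coeff (g.natDegree - 1 - (m' : ℕ))), if_pos (Finset.mem_univ _)]
        · rw [if_neg hlt]
          apply Finset.sum_eq_zero
          intro m' _
          rw [if_neg (show ¬ (m' : ℕ) = (e k : ℕ) + 1 by have := m'.isLt; omega)]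
    rw [hLHS, hRHS]
    have hXb : (X * b l).coeff (g.natDegree - 1 - (e k : ℕ)) =
        (if (e k : ℕ) + 1 < g.natDegree then
          (b l).coeff (g.natDegree - 1 - ((e k : ℕ) + 1)) else 0) := by
      by_cases hlt : (e k : ℕ) + 1 < g.natDegree
      · rw [if_pos hlt,
          show g.natDegree - 1 - (e k : ℕ) = (g.natDegree - 1 - ((e k : ℕ) + 1)) + 1 from
            by omega, Polynomial.coeff_X_mul]
      · rw [if_neg hlt, show g.natDegree - 1 - (e k : ℕ) = 0 from by omega,
          Polynomial.mul_coeff_zero, Polynomial.coeff_X_zero, zero_mul]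
    rw [hXb]
    split_ifs <;> ring
  -- assemble everything
  have hKf : aeval C'ᵀ f * P = P * aeval T f := aux_aeval_commute _ _ _ hKL f
  obtain ⟨B, hBk⟩ := aux_aeval_fromBlocks (companion g₂)ᵀ Y (companion g₁)ᵀ f
  set A₂ : Matrix (Fin g₂.natDegree) (Fin g₂.natDegree) R := aeval (companion g₂)ᵀ f with hA₂def
  set A₁ : Matrix (Fin g₁.natDegree) (Fin g₁.natDegree) R := aeval (companion g₁)ᵀ f with hA₁def
  have hA₂ : IsUnit A₂.det := by
    rw [hA₂def, aux_aeval_transpose, Matrix.det_transpose]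
    exact hres
  set L : Matrix (Fin g₂.natDegree ⊕ Fin g₁.natDegree) (Fin g₂.natDegree ⊕ Fin g₁.natDegree) R :=
    fromBlocks A₂⁻¹ 0 0 1 with hL
  set Rm : Matrix (Fin g₂.natDegree ⊕ Fin g₁.natDegree) (Fin g₂.natDegree ⊕ Fin g₁.natDegree) R :=
    fromBlocks 1 (-(A₂⁻¹ * B)) 0 1 with hRm
  have h5 : P⁻¹ * (aeval C'ᵀ f * P) = aeval T f := by
    rw [hKf, ← Matrix.mul_assoc, Matrix.nonsing_inv_mul P hPdet, Matrix.one_mul]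
  have h6 : L * aeval T f * Rm = fromBlocks 1 0 0 A₁ := by
    rw [hT, hBk, hL, hRm, Matrix.fromBlocks_multiply, Matrix.fromBlocks_multiply,
      Matrix.nonsing_inv_mul _ hA₂]
    simp
  have key : (L * P⁻¹) * aeval C'ᵀ f * (P * Rm) = fromBlocks 1 0 0 A₁ := by
    calc (L * P⁻¹) * aeval C'ᵀ f * (P * Rm)
        = L * (P⁻¹ * (aeval C'ᵀ f * P)) * Rm := by
          simp only [Matrix.mul_assoc]
      _ = L * aeval T f * Rm := by rw [h5, Matrix.mul_assoc]
      _ = fromBlocks 1 0 0 A₁ := h6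
  have h7 : (P * Rm)ᵀ * aeval C' f * (L * P⁻¹)ᵀ =
      fromBlocks 1 0 0 (aeval (companion g₁) f) := by
    have hA₁t : A₁ᵀ = aeval (companion g₁) f := by
      rw [hA₁def, aux_aeval_transpose, Matrix.transpose_transpose]
    have ht := congrArg Matrix.transpose key
    rw [Matrix.transpose_mul (L * P⁻¹ * aeval C'ᵀ f) (P * Rm),
      Matrix.transpose_mul (L * P⁻¹) (aeval C'ᵀ f)] at ht
    rw [aux_aeval_transpose C' f, Matrix.transpose_transpose] at ht
    rw [← Matrix.mul_assoc] at ht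
    simp only [Matrix.fromBlocks_transpose, Matrix.transpose_zero, Matrix.transpose_one,
      hA₁t] at ht
    exact ht
  -- the witnesses
  refine ⟨reindex e e ((P * Rm)ᵀ), reindex e e ((L * P⁻¹)ᵀ), ?_, ?_, ?_⟩
  · rw [Matrix.det_reindex_self, Matrix.det_transpose, Matrix.det_mul]
    apply hPdet.mul
    rw [hRm, Matrix.det_fromBlocks_zero₂₁, Matrix.det_one, Matrix.det_one, mul_one]
    exact isUnit_one
  · rw [Matrix.det_reindex_self, Matrix.det_transpose, Matrix.det_mul]
    have hdL : IsUnit L.det := by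
      rw [hL, Matrix.det_fromBlocks_zero₂₁, Matrix.det_one, mul_one]
      exact IsUnit.of_mul_eq_one _
        (by rw [← Matrix.det_mul, Matrix.nonsing_inv_mul _ hA₂, Matrix.det_one])
    apply hdL.mul
    exact IsUnit.of_mul_eq_one _
      (by rw [← Matrix.det_mul, Matrix.nonsing_inv_mul _ hPdet, Matrix.det_one])
  · have hcompg : companion g = reindex e e C' := by
      rw [hC']
      ext i j
      simp [Matrix.reindex_apply, Matrix.submatrix_apply]
    have hcomp : aeval (companion g) f = reindex e e (aeval C' f) := by
      rw [hcompg, ← Matrix.reindexAlgEquiv_apply R R e,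
        Polynomial.aeval_algHom_apply (Matrix.reindexAlgEquiv R R e) C' f,
        Matrix.reindexAlgEquiv_apply]
    rw [hcomp]
    calc reindex e e ((P * Rm)ᵀ) * reindex e e (aeval C' f) * reindex e e ((L * P⁻¹)ᵀ)
        = reindex e e ((P * Rm)ᵀ * aeval C' f * (L * P⁻¹)ᵀ) := by
          simp only [← Matrix.reindexAlgEquiv_apply R R e, ← _root_.map_mul]
      _ = reindex e e (fromBlocks 1 0 0 (aeval (companion g₁) f)) := by rw [h7]
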